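/- Let S be a commutative periodic semigroup and R a commutative unitary ring. Suppose that St(e) ⊆ E(S) for every idempotent e ∈ E(S). Then I(S) ≤ d(S,R) + 1, where I(S) is the Erdős–Burgess constant of S. -/

import Mathlib

namespace ZS

variable (S : Type*) [AddCommSemigroup S]

/-- `nsmul' n x = (n+1)·x`, iterated addition in a semigroup. -/
def nsmul' : ℕ → S → S
  | 0, x => x
  | n + 1, x => x + nsmul' n x

/-- The cyclic subsemigroup `⟨x⟩ = {x, 2x, 3x, …}` generated by `x`. -/
def cyc (x : S) : Set S := Set.range fun n => nsmul' S n x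

/-- `x` is periodic if `⟨x⟩` is finite. -/
def IsPeriodicElem (x : S) : Prop := (cyc S x).Finite

/-- A semigroup is periodic if every element is periodic. -/
def IsPeriodicSemigroup : Prop := ∀ x : S, IsPeriodicElem S x

/-- `ρ(x)`: the least `m ≥ 1` such that `m·x` is idempotent (equivalently `m·x = e(x)`). -/
noncomputable def rho (x : S) : ℕ :=
  sInf {n : ℕ | nsmul' S n x + nsmul' S n x = nsmul' S n x} + 1

/-- `e(x)`: the unique idempotent of the finite cyclic semigroup `⟨x⟩`. -/
noncomputable def eIdem (x : S) : S :=
  nsmul' S (sInf {n : ℕ | nsmul' S n x + nsmul' S n x = nsmul' S n x}) x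

/-- The period of a (periodic) element `x`: the least `n > 0` with `(m+n)x = mx` for some `m`. -/
noncomputable def period (x : S) : ℕ :=
  sInf {n : ℕ | 0 < n ∧ ∃ m : ℕ, nsmul' S (m + n) x = nsmul' S m x}

/-- The index of a (periodic) element `x`: the least `k ≥ 1` with `kx = tx` for some `t ≠ k`. -/
noncomputable def indexOf (x : S) : ℕ :=
  sInf {k : ℕ | ∃ t : ℕ, t ≠ k ∧ nsmul' S k x = nsmul' S t x} + 1

/-- `exp(S)`: the lcm of the periods of the elements of `S`, described as the least positive
common multiple of all the periods. -/
noncomputable def expS : ℕ := sInf {n : ℕ | 0 < n ∧ ∀ x : S, period S x ∣ n}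

/-- `K` is a splitting field for exponent `n`: it contains exactly `n` `n`-th roots of unity. -/
def SplitField (K : Type*) [Field K] (n : ℕ) : Prop := Set.ncard {ζ : K | ζ ^ n = 1} = n

/-- Green's preorder `a ≼_𝓗 b`. -/
def gLe (a b : S) : Prop := a = b ∨ ∃ c : S, a = b + c

/-- Green's congruence `a 𝓗 b`. -/
def gEq (a b : S) : Prop := gLe S a b ∧ gLe S b a

/-- `a ≺_𝓗 b`. -/
def gLt (a b : S) : Prop := gLe S a b ∧ ¬ gLe S b a

/-- The Green class `H_a`. -/
def HClass (a : S) : Set S := {x : S | gEq S x a}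

/-- The stabilizer `St(H_a)` of the Green class of `a`. -/
def stab (a : S) : Set S := {c : S | ∀ x ∈ HClass S a, c + x ∈ HClass S a}

theorem gLe_trans {a b c : S} (h1 : gLe S a b) (h2 : gLe S b c) : gLe S a c := by
  rcases h1 with rfl | ⟨u, rfl⟩
  · exact h2
  · rcases h2 with rfl | ⟨v, rfl⟩
    · exact Or.inr ⟨u, rfl⟩
    · exact Or.inr ⟨v + u, by rw [add_assoc]⟩

theorem gLe_add_right {a b : S} (x : S) (h : gLe S a b) : gLe S (a + x) (b + x) := by
  rcases h with rfl | ⟨c, rfl⟩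
  · exact Or.inl rfl
  · exact Or.inr ⟨c, by rw [add_right_comm]⟩

theorem gEq_add {w x y z : S} (h1 : gEq S w x) (h2 : gEq S y z) : gEq S (w + y) (x + z) := by
  have k1 : gLe S (w + y) (x + y) := gLe_add_right S y h1.1
  have k2 : gLe S (x + y) (x + z) := by
    have h := gLe_add_right S x h2.1
    rwa [add_comm z x, add_comm y x] at h
  have k3 : gLe S (x + z) (w + z) := gLe_add_right S z h1.2
  have k4 : gLe S (w + z) (w + y) := by
    have h := gLe_add_right S w h2.2
    rwa [add_comm z w, add_comm y w] at h
  exact ⟨gLe_trans S k1 k2, gLe_trans S k3 k4⟩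

/-- Green's congruence as an additive congruence. -/
def greenCon : AddCon S where
  r a b := gEq S a b
  iseqv := ⟨fun _ => ⟨Or.inl rfl, Or.inl rfl⟩, fun h => ⟨h.2, h.1⟩,
    fun h1 h2 => ⟨gLe_trans S h1.1 h2.1, gLe_trans S h2.2 h1.2⟩⟩
  add' h1 h2 := gEq_add S h1 h2

/-- The quotient semigroup `S/𝓗`. -/
abbrev GQuot := (greenCon S).Quotient

/-- The canonical epimorphism `S → S/𝓗`, `a ↦ ā`. -/
def gq (a : S) : GQuot S := (a : (greenCon S).Quotient)

/-- The sum of a sequence (multiset) of elements of `S`, computed in `WithZero S`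
(the empty sequence having sum the adjoined zero). -/
def msum (T : Multiset S) : WithZero S := (T.map fun x => (x : WithZero S)).sum

/-- A sequence over a commutative semigroup is (additively) reducible if some proper
(possibly empty) subsequence has the same sum; the empty sequence has sum the identity of `S`,
when `S` has one. -/
def IsReducible (T : Multiset S) : Prop :=
  (∃ T' : Multiset S, T' ≤ T ∧ T' ≠ T ∧ T' ≠ 0 ∧ msum S T' = msum S T) ∨
    (T ≠ 0 ∧ ∃ z : S, msum S T = ↑z ∧ ∀ s : S, z + s = s)

/-- The Davenport constant `D(S)` of a commutative semigroup. -/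
noncomputable def Dav : ℕ∞ :=
  sInf {n : ℕ∞ | ∀ T : Multiset S, (T.card : ℕ∞) ≥ n → IsReducible S T}

/-- The relative Davenport constant `D_a(S)`: the largest length of an additively
irreducible sequence with sum `a`. -/
noncomputable def Drel (a : S) : ℕ∞ :=
  sSup {n : ℕ∞ | ∃ T : Multiset S,
    T ≠ 0 ∧ ¬ IsReducible S T ∧ msum S T = ↑a ∧ n = (T.card : ℕ∞)}

/-- The Erdős–Burgess constant `I(S)`: the smallest `ℓ` such that every sequence over `S` of
length (at least) `ℓ` has a nonempty subsequence with idempotent sum. -/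
noncomputable def EB : ℕ∞ :=
  sInf {n : ℕ∞ | ∀ T : Multiset S, (T.card : ℕ∞) ≥ n →
    ∃ T' : Multiset S, T' ≤ T ∧ T' ≠ 0 ∧ ∃ x : S, msum S T' = ↑x ∧ x + x = x}

/-- The Davenport constant of a (semigroup which is a) group: the smallest `ℓ` such that every
sequence of length (at least) `ℓ` has a nonempty subsequence whose sum is the identity element. -/
noncomputable def DavGrpSet : ℕ∞ :=
  sInf {n : ℕ∞ | ∀ T : Multiset S, (T.card : ℕ∞) ≥ n →
    ∃ T' : Multiset S, T' ≤ T ∧ T' ≠ 0 ∧ ∃ z : S, msum S T' = ↑z ∧ ∀ x : S, z + x = x}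

/-- The Davenport constant of a finite abelian group. -/
noncomputable def DavG (G : Type*) [AddCommMonoid G] : ℕ∞ :=
  sInf {n : ℕ∞ | ∀ T : Multiset G, (T.card : ℕ∞) ≥ n →
    ∃ T' : Multiset G, T' ≤ T ∧ T' ≠ 0 ∧ T'.sum = 0}

/-- `ψ(a)`: the largest length of a strictly ascending chain of principal ideals starting at
`(a)`. -/
noncomputable def psi (a : S) : ℕ∞ :=
  sSup {n : ℕ∞ | ∃ ℓ : ℕ, n = (ℓ : ℕ∞) ∧
    ∃ c : ℕ → S, c 0 = a ∧ ∀ i < ℓ, gLt S (c i) (c (i + 1))}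

/-- `Ψ(S)`: the largest length of a strictly ascending chain of principal ideals of `S`. -/
noncomputable def PsiS : ℕ∞ := ⨆ a : S, psi S a

/-- A subset of a semigroup which is a subgroup: closed under addition, with an identity
and inverses. -/
def IsSubgroupSet (T : Set S) : Prop :=
  (∀ x ∈ T, ∀ y ∈ T, x + y ∈ T) ∧
    ∃ z ∈ T, (∀ x ∈ T, z + x = x) ∧ ∀ x ∈ T, ∃ y ∈ T, x + y = z

open Classical in
/-- `ε_a`: `0` if `⟨a⟩` is a group, `1` otherwise. -/
noncomputable def eps (a : S) : ℕ∞ := if IsSubgroupSet S (cyc S a) then 0 else 1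

/-- The Schützenberger maps on the Green class `H_a`: maps `x ↦ c + x` for `c ∈ St(H_a)`. -/
def GammaSet (a : S) : Set (↥(HClass S a) → ↥(HClass S a)) :=
  {f | ∃ c ∈ stab S a, ∀ x : ↥(HClass S a), (↑(f x) : S) = c + ↑x}

/-- The Schützenberger group `Γ(H_a)` (as a type; it is empty when `St(H_a) = ∅`). -/
def Gamma (a : S) : Type _ := ↥(GammaSet S a)

instance (a : S) : Add (Gamma S a) :=
  ⟨fun f g => ⟨f.1 ∘ g.1, by
    obtain ⟨c, hc, hfc⟩ := f.2
    obtain ⟨d, hd, hgd⟩ := g.2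
    refine ⟨c + d, fun x hx => by rw [add_assoc]; exact hc _ (hd x hx), fun x => ?_⟩
    show (↑(f.1 (g.1 x)) : S) = c + d + ↑x
    rw [hfc (g.1 x), hgd x, add_assoc]⟩⟩

instance (a : S) : AddCommSemigroup (Gamma S a) where
  add_assoc f g h := Subtype.ext rfl
  add_comm f g := by
    obtain ⟨c, hc, hfc⟩ := f.2
    obtain ⟨d, hd, hgd⟩ := g.2
    apply Subtype.ext
    funext x
    apply Subtype.ext
    show (↑(f.1 (g.1 x)) : S) = ↑(g.1 (f.1 x))
    rw [hfc (g.1 x), hgd x, hgd (f.1 x), hfc x, add_left_comm]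

/-- `St(H_a)` as a subsemigroup of `S`. -/
def stabSub (a : S) : AddSubsemigroup S where
  carrier := stab S a
  add_mem' := fun {c d} hc hd x hx => by rw [add_assoc]; exact hc _ (hd x hx)

/-- The canonical surjection `π_a : St(H_a) → Γ(H_a)`, `c ↦ γ_c`. -/
def gammaMap (a : S) (c : ↥(stabSub S a)) : Gamma S a :=
  ⟨fun x => ⟨(↑c : S) + ↑x, c.2 ↑x x.2⟩, ⟨↑c, c.2, fun _ => rfl⟩⟩

/-- The semigroup algebra `R[X;S]` of a commutative semigroup, realized inside the monoid
algebra of the monoid obtained from `S` by adjoining an identity element. -/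
abbrev SAlg (R : Type*) [CommRing R] (S : Type*) [AddCommSemigroup S] :=
  AddMonoidAlgebra R (WithZero S)

/-- The monomial `r·X^s` of the semigroup algebra. -/
noncomputable def Xm (R : Type*) [CommRing R] {S : Type*} [AddCommSemigroup S] (s : S) (r : R) :
    SAlg R S := AddMonoidAlgebra.single (↑s) r

/-- The factor `X^s - a·X^{e(s)}` of the semigroup algebra. -/
noncomputable def facX (R : Type*) [CommRing R] {S : Type*} [AddCommSemigroup S]
    (s : S) (a : R) : SAlg R S := Xm R s 1 - Xm R (eIdem S s) a

/-- The invariant `d(S,R)`: the supremum of all `ℓ` such that some sequence `s_1,…,s_ℓ` over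
`S` satisfies `(X^{s_1} - a_1 X^{e(s_1)}) ⋯ (X^{s_ℓ} - a_ℓ X^{e(s_ℓ)}) ≠ 0` in `R[X;S]` for all
nonzero `a_1, …, a_ℓ ∈ R`. -/
noncomputable def dd (R : Type*) [CommRing R] (S : Type*) [AddCommSemigroup S] : ℕ∞ :=
  sSup {n : ℕ∞ | ∃ ℓ : ℕ, n = (ℓ : ℕ∞) ∧ ∃ s : Fin ℓ → S,
    ∀ a : Fin ℓ → R, (∀ i, a i ≠ 0) → ∏ i, facX R (s i) (a i) ≠ 0}

/-- `Λ(S)`: the minimum over all generating sets `A` of `S` of `1 + Σ_{a∈A} (ρ(a)-1)`. -/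
noncomputable def Lam (S : Type*) [AddCommSemigroup S] : ℕ :=
  sInf {n : ℕ | ∃ A : Finset S,
    AddSubsemigroup.closure (↑A : Set S) = ⊤ ∧ n = 1 + ∑ a ∈ A, (rho S a - 1)}

/-- An elementary semigroup: an ideal extension of a nilsemigroup `N` by a group with zero
`G ∪ {∞}`. -/
def IsElementary : Prop :=
  ∃ G N : Set S, G ∪ N = Set.univ ∧ Disjoint G N ∧ IsSubgroupSet S G ∧
    (∀ x ∈ N, ∀ s : S, s + x ∈ N) ∧
    ∃ z ∈ N, (∀ s : S, s + z = z) ∧ ∀ x ∈ N, ∃ n : ℕ, nsmul' S n x = z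



section StmtTenAux

variable {S : Type*} [AddCommSemigroup S]

theorem nsmul'_add' (x : S) (m n : ℕ) :
    nsmul' S (m + n + 1) x = nsmul' S m x + nsmul' S n x := by
  induction m with
  | zero => simp only [Nat.zero_add]; rfl
  | succ m ih =>
      have : m + 1 + n + 1 = (m + n + 1) + 1 := by omega
      rw [this]
      show x + nsmul' S (m + n + 1) x = (x + nsmul' S m x) + nsmul' S n x
      rw [ih, add_assoc]

theorem nsmul'_step (x : S) {m k p : ℕ} (h : nsmul' S (m + k) x = nsmul' S m x)
    (hp : m ≤ p) : nsmul' S (p + k) x = nsmul' S p x := by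
  rcases Nat.exists_eq_add_of_le hp with ⟨q, rfl⟩
  cases q with
  | zero => simpa using h
  | succ q =>
      have e1 : m + (q+1) + k = (m + k) + q + 1 := by omega
      have e2 : m + (q+1) = m + q + 1 := by omega
      rw [e1, e2, nsmul'_add', nsmul'_add', h]

theorem idem_set_nonempty {x : S} (hx : IsPeriodicElem S x) :
    {n : ℕ | nsmul' S n x + nsmul' S n x = nsmul' S n x}.Nonempty := by
  have hfin : ¬ Function.Injective (fun n => nsmul' S n x) := by
    intro hinj
    exact Set.infinite_range_of_injective hinj hx
  rw [Function.not_injective_iff] at hfin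
  obtain ⟨n1, n2, heq, hne⟩ := hfin
  obtain ⟨m, k, hk, hmk⟩ : ∃ m k : ℕ, 0 < k ∧ nsmul' S (m + k) x = nsmul' S m x := by
    rcases Nat.lt_or_ge n1 n2 with h | h
    · exact ⟨n1, n2 - n1, by omega, by rw [show n1 + (n2-n1) = n2 by omega]; exact heq.symm⟩
    · exact ⟨n2, n1 - n2, by omega, by rw [show n2 + (n1-n2) = n1 by omega]; exact heq⟩
  have hrep : ∀ j p, m ≤ p → nsmul' S (p + j * k) x = nsmul' S p x := by
    intro j
    induction j with
    | zero => intro p _; simp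
    | succ j ih =>
        intro p hp
        have : p + (j+1) * k = (p + k) + j * k := by ring
        rw [this, ih (p + k) (by omega), nsmul'_step x hmk hp]
  have hN : m + 1 ≤ (m+1) * k := Nat.le_mul_of_pos_right _ hk
  obtain ⟨N, hNdef⟩ : ∃ N, N = (m+1) * k := ⟨_, rfl⟩
  rw [← hNdef] at hN
  refine ⟨N - 1, ?_⟩
  have hge : m ≤ N - 1 := by omega
  have h2 : (N - 1) + (N - 1) + 1 = (N - 1) + N := by omega
  show nsmul' S (N-1) x + nsmul' S (N-1) x = nsmul' S (N-1) x
  rw [← nsmul'_add', h2, hNdef, hrep (m+1) _ (hNdef ▸ hge)]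

theorem eIdem_idem {x : S} (hx : IsPeriodicElem S x) :
    eIdem S x + eIdem S x = eIdem S x :=
  Nat.sInf_mem (idem_set_nonempty hx)

theorem coe_nsmul' (x : S) (n : ℕ) :
    ((nsmul' S n x : S) : WithZero S) = (n + 1) • (x : WithZero S) := by
  induction n with
  | zero => simp [nsmul']
  | succ n ih =>
      show ((x + nsmul' S n x : S) : WithZero S) = (n + 2) • (x : WithZero S)
      rw [WithZero.coe_add, ih]
      rw [show n + 1 + 1 = (n+1)+1 from rfl, succ_nsmul' (x : WithZero S) (n+1)]

theorem hstM (hst : ∀ e : S, e + e = e → ∀ c : S, c + e = e → c + c = c) :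
    ∀ e : WithZero S, e + e = e → ∀ c : WithZero S, c + e = e → c + c = c := by
  intro e he c hc
  induction c using WithZero.recZeroCoe with
  | zero => simp
  | coe c =>
      induction e using WithZero.recZeroCoe with
      | zero => simp at hc
      | coe e =>
          rw [← WithZero.coe_add, WithZero.coe_inj] at hc ⊢
          rw [← WithZero.coe_add, WithZero.coe_inj] at he
          exact hst e he c hc

theorem exists_nsmul_idem (hper : ∀ x : S, IsPeriodicElem S x) (c : WithZero S) :
    ∃ k : ℕ, 0 < k ∧ k • c + k • c = k • c := by
  induction c using WithZero.recZeroCoe with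
  | zero => exact ⟨1, one_pos, by simp⟩
  | coe x =>
      obtain ⟨n, hn⟩ := idem_set_nonempty (hper x)
      refine ⟨n + 1, Nat.succ_pos n, ?_⟩
      rw [← coe_nsmul', ← WithZero.coe_add, WithZero.coe_inj]
      exact hn

theorem sum_coe_nonempty {ι : Type*} [DecidableEq ι] (s : ι → S) (t : Finset ι)
    (ht : t.Nonempty) : ∃ x : S, ∑ i ∈ t, ((s i : WithZero S)) = ↑x := by
  induction t using Finset.cons_induction with
  | empty => exact absurd ht (by simp)
  | cons a u ha ih =>
      rw [Finset.sum_cons]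
      rcases u.eq_empty_or_nonempty with rfl | hu
      · exact ⟨s a, by simp⟩
      · obtain ⟨x, hx⟩ := ih hu
        exact ⟨s a + x, by rw [hx, WithZero.coe_add]⟩

theorem key_collision (hper : ∀ x : S, IsPeriodicElem S x)
    (hst : ∀ e : S, e + e = e → ∀ c : S, c + e = e → c + c = c)
    {ℓ : ℕ} (s : Fin ℓ → S) (t : Finset (Fin ℓ)) (htu : t ≠ Finset.univ)
    (hcol : (∑ i ∈ t, ((s i : WithZero S))) + ∑ i ∈ tᶜ, ((eIdem S (s i) : WithZero S))
      = ∑ i, ((s i : WithZero S))) :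
    ∃ x : S, (∑ i ∈ tᶜ, ((s i : WithZero S))) = ↑x ∧ x + x = x := by
  set M := WithZero S
  set w : M := ∑ i ∈ t, ((s i : WithZero S)) with hw
  set v : M := ∑ i ∈ tᶜ, ((s i : WithZero S)) with hv
  set f : M := ∑ i ∈ tᶜ, ((eIdem S (s i) : WithZero S)) with hf
  have huniv : w + v = ∑ i, ((s i : WithZero S)) := Finset.sum_add_sum_compl t _
  have hwf : w + f = w + v := by rw [hcol, huniv]
  have hfidem : f + f = f := by
    rw [hf, ← Finset.sum_add_distrib]
    refine Finset.sum_congr rfl fun i _ => ?_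
    rw [← WithZero.coe_add, WithZero.coe_inj]
    exact eIdem_idem (hper (s i))
  have hpump : ∀ j : ℕ, (j+1) • w + f = (j+1) • w + v := by
    intro j
    induction j with
    | zero => simpa using hwf
    | succ j ih =>
        rw [succ_nsmul' w (j+1), add_assoc, add_assoc, ih]
  obtain ⟨k, hk, hkidem⟩ := exists_nsmul_idem hper w
  set e : M := k • w with he
  have hef : e + f = e + v := by
    obtain ⟨j, rfl⟩ : ∃ j, k = j + 1 := ⟨k - 1, by omega⟩
    exact hpump j
  set g : M := e + f with hg
  have hgidem : g + g = g := by
    rw [hg, show e + f + (e + f) = (e + e) + (f + f) by abel, hkidem, hfidem]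
  have hvg : v + g = g := by
    rw [hg, show v + (e + f) = (e + v) + f by abel, ← hef,
      show e + f + f = e + (f + f) by abel, hfidem]
  have hvidem : v + v = v := hstM hst g hgidem v hvg
  have htc : (tᶜ : Finset (Fin ℓ)).Nonempty :=
    (Finset.compl_ne_univ_iff_nonempty tᶜ).mp (by simpa using htu)
  obtain ⟨x, hx⟩ := sum_coe_nonempty s tᶜ htc
  refine ⟨x, hx, ?_⟩
  rw [hv, hx, ← WithZero.coe_add, WithZero.coe_inj] at hvidem
  exact hvidem

theorem msum_eq (X : Multiset S) :
    msum S X = (Multiset.map (fun x => (WithZero.coe x)) X).sum := by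
  rw [msum]
  simp only [Multiset.map_id']
  congr 1
  show X.bind (fun a => pure (↑a : WithZero S)) = _
  simp [Multiset.bind_singleton]

theorem prod_facX_ne_zero {R : Type*} [CommRing R] [Nontrivial R]
    (hper : ∀ x : S, IsPeriodicElem S x)
    (hst : ∀ e : S, e + e = e → ∀ c : S, c + e = e → c + c = c)
    {ℓ : ℕ} (s : Fin ℓ → S)
    (hfree : ∀ t : Finset (Fin ℓ), t.Nonempty → ∀ x : S,
      (∑ i ∈ t, ((s i : WithZero S))) = ↑x → x + x ≠ x)
    (a : Fin ℓ → R) :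
    ∏ i, facX R (s i) (a i) ≠ 0 := by
  classical
  set E : Finset (Fin ℓ) → WithZero S :=
    fun t => (∑ i ∈ t, ((s i : WithZero S))) + ∑ i ∈ tᶜ, ((eIdem S (s i) : WithZero S))
    with hE
  set c : Finset (Fin ℓ) → R := fun t => (∏ _i ∈ t, (1 : R)) * ∏ i ∈ tᶜ, (-(a i)) with hc
  set U : WithZero S := ∑ i, ((s i : WithZero S)) with hU
  have hfac : ∀ i : Fin ℓ, facX R (s i) (a i) =
      AddMonoidAlgebra.single ((s i : WithZero S)) (1 : R) +
        AddMonoidAlgebra.single ((eIdem S (s i) : WithZero S)) (-(a i)) := by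
    intro i
    have hneg : AddMonoidAlgebra.single ((eIdem S (s i) : WithZero S)) (-(a i)) =
        - AddMonoidAlgebra.single ((eIdem S (s i) : WithZero S)) (a i) :=
      AddMonoidAlgebra.single_neg _ _
    rw [facX, Xm, Xm, sub_eq_add_neg, ← hneg]
  have hterm : ∀ t : Finset (Fin ℓ),
      ((∏ i ∈ t, AddMonoidAlgebra.single ((s i : WithZero S)) (1 : R)) *
        ∏ i ∈ Finset.univ \ t,
          AddMonoidAlgebra.single ((eIdem S (s i) : WithZero S)) (-(a i))) =
      AddMonoidAlgebra.single (E t) (c t) := by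
    intro t
    rw [AddMonoidAlgebra.prod_single, AddMonoidAlgebra.prod_single,
      AddMonoidAlgebra.single_mul_single]
    simp only [hE, hc, Finset.compl_eq_univ_sdiff]
  intro h0
  rw [Finset.prod_congr rfl (fun i _ => hfac i), Finset.prod_add,
    Finset.sum_congr rfl (fun t _ => hterm t)] at h0
  have hcoef : ∑ t ∈ (Finset.univ : Finset (Fin ℓ)).powerset,
      (AddMonoidAlgebra.single (E t) (c t)).coeff U = 0 := by
    have h1 : (∑ t ∈ (Finset.univ : Finset (Fin ℓ)).powerset,
        AddMonoidAlgebra.single (E t) (c t)).coeff U = ∑ t ∈ (Finset.univ : Finset (Fin ℓ)).powerset,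
        (AddMonoidAlgebra.single (E t) (c t)).coeff U := by
      rw [AddMonoidAlgebra.coeff_sum, Finsupp.finset_sum_apply]
    rw [h0] at h1
    exact h1.symm.trans rfl
  have hsa : ∀ t : Finset (Fin ℓ),
      (AddMonoidAlgebra.single (E t) (c t)).coeff U = if E t = U then c t else 0 :=
    fun t => Finsupp.single_apply
  rw [Finset.sum_congr rfl (fun t _ => hsa t)] at hcoef
  rw [Finset.sum_eq_single_of_mem Finset.univ (Finset.mem_powerset_self _) ?other] at hcoef
  · have hEuniv : E Finset.univ = U := by
      rw [hE]; simp; exact hU.symm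
    rw [if_pos hEuniv, hc] at hcoef
    simp at hcoef
  case other =>
    intro t _ htu
    rw [if_neg]
    intro hEt
    rw [hE] at hEt
    obtain ⟨x, hx, hxx⟩ := key_collision hper hst s t htu hEt
    exact hfree tᶜ ((Finset.compl_ne_univ_iff_nonempty tᶜ).mp (by simpa using htu)) x hx hxx

end StmtTenAux

/-- `I(S) ≤ d(S,R) + 1` when stabilizers of idempotents consist of
idempotents. -/
theorem stmt10 (S : Type*) [AddCommSemigroup S] (hper : IsPeriodicSemigroup S)
    (R : Type*) [CommRing R]
    (hst : ∀ e : S, e + e = e → ∀ c : S, c + e = e → c + c = c) :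
    EB S ≤ dd R S + 1 := by
  classical
  apply sInf_le
  intro T hT
  by_contra hcon
  push_neg at hcon
  -- basic setup
  have hl1 : 1 ≤ T.card := by
    have h1 : (1 : ℕ∞) ≤ (T.card : ℕ∞) :=
      le_trans (le_add_self) hT
    exact_mod_cast h1
  set ℓ := T.card with hℓ
  have hlen : T.card = T.toList.length := (Multiset.length_toList T).symm
  set s : Fin ℓ → S := fun i => T.toList.get (Fin.cast hlen i) with hs
  have hmap : Multiset.map s Finset.univ.val = T := by
    rw [Fin.univ_val_map]
    have : List.ofFn s = T.toList := by
      apply List.ext_get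
      · simp [hs]; exact hℓ
      · intro n h1 h2
        simp [hs]
    rw [this, Multiset.coe_toList]
  have hsub : ∀ t : Finset (Fin ℓ), Multiset.map s t.val ≤ T := by
    intro t
    rw [← hmap]
    exact Multiset.map_le_map (Finset.val_le_iff.mpr t.subset_univ)
  have hmsum : ∀ t : Finset (Fin ℓ),
      msum S (Multiset.map s t.val) = ∑ i ∈ t, ((s i : WithZero S)) := by
    intro t
    rw [msum_eq, Multiset.map_map]
    rfl
  have hfree : ∀ t : Finset (Fin ℓ), t.Nonempty → ∀ x : S,
      (∑ i ∈ t, ((s i : WithZero S))) = ↑x → x + x ≠ x := by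
    intro t ht x hx hxx
    have hne : Multiset.map s t.val ≠ 0 := by
      simp only [ne_eq, Multiset.map_eq_zero]
      exact fun h => Finset.nonempty_iff_ne_empty.mp ht (Finset.val_eq_zero.mp h)
    exact hcon (Multiset.map s t.val) (hsub t) hne x (by rw [hmsum t, hx]) hxx
  have hdd : (ℓ : ℕ∞) ≤ dd R S := by
    apply le_sSup
    refine ⟨ℓ, rfl, s, fun a ha => ?_⟩
    haveI : Nontrivial R := nontrivial_of_ne (a ⟨0, hl1⟩) 0 (ha ⟨0, hl1⟩)
    exact prod_facX_ne_zero hper hst s hfree a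
  have h2 : dd R S + 1 ≤ dd R S := le_trans hT hdd
  rcases eq_or_ne (dd R S) ⊤ with h | h
  · rw [h, top_add] at hT
    exact absurd (top_le_iff.mp hT) (ENat.coe_ne_top ℓ)
  · exact absurd ((ENat.add_one_le_iff h).mp h2) (lt_irrefl _)

end ZS
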